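/- Let λ > 0 and r > 0, and let x, y, z, t > 0 satisfy |x − y| ≥ r and |z − x| ≤ 3r. Then P_t(x,y) ≤ 16^{λ+1} P_t(z,y). -/

import Mathlib

open MeasureTheory Set ENNReal

/-- The Bessel Poisson kernel given by Weinstein's formula. -/
noncomputable def PK (lam t x y : ℝ) : ℝ :=
  (2 * lam * t / Real.pi) *
    ∫ θ in Set.Ioo (0 : ℝ) Real.pi,
      Real.sin θ ^ (2 * lam - 1) *
        (x ^ 2 + y ^ 2 + t ^ 2 - 2 * x * y * Real.cos θ) ^ (-(lam + 1))

/-- The Poisson extension `P_σ f (x, t)` of a nonnegative function on `ℝ₊`. -/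
noncomputable def Pfwd (lam : ℝ) (σ : Measure ℝ) (f : ℝ → ℝ≥0∞) (x t : ℝ) : ℝ≥0∞ :=
  ∫⁻ y in Set.Ioi (0 : ℝ), ENNReal.ofReal (PK lam t x y) * f y ∂σ

/-- The adjoint operator `P*_μ g (y)` of a nonnegative function on `ℝ²₊₊`. -/
noncomputable def Padj (lam : ℝ) (μ : Measure (ℝ × ℝ)) (g : ℝ × ℝ → ℝ≥0∞) (y : ℝ) : ℝ≥0∞ :=
  ∫⁻ p in Set.Ioi (0 : ℝ) ×ˢ Set.Ioi (0 : ℝ), ENNReal.ofReal (PK lam p.2 p.1 y) * g p ∂μ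

/-- The triple `3I` of the interval `I = (a, b)`, intersected with `ℝ₊`. -/
def tri (a b : ℝ) : Set ℝ :=
  Set.Ioo ((a + b) / 2 - 3 * (b - a) / 2) ((a + b) / 2 + 3 * (b - a) / 2) ∩ Set.Ioi 0

/-- The Carleson box `Î = I × [0, |I|]` of the interval `I = (a, b)`. -/
def boxI (a b : ℝ) : Set (ℝ × ℝ) := Set.Ioo a b ×ˢ Set.Icc 0 (b - a)

/-- The enlarged box `3Î = 3I × [0, 3|I|]` of the interval `I = (a, b)`. -/
def boxI3 (a b : ℝ) : Set (ℝ × ℝ) := tri a b ×ˢ Set.Icc 0 (3 * (b - a))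

/-- The two-weight norm inequality for the Bessel Poisson operator with constant `N`,
for nonnegative `f ∈ L²(ℝ₊; σ)`. -/
def NormIneq (lam : ℝ) (σ : Measure ℝ) (μ : Measure (ℝ × ℝ)) (N : ℝ≥0∞) : Prop :=
  ∀ f : ℝ → ℝ≥0∞, Measurable f → (∫⁻ y in Set.Ioi (0 : ℝ), f y ^ 2 ∂σ) < ∞ →
    (∫⁻ p in Set.Ioi (0 : ℝ) ×ˢ Set.Ioi (0 : ℝ), Pfwd lam σ f p.1 p.2 ^ 2 ∂μ)
      ≤ N ^ 2 * ∫⁻ y in Set.Ioi (0 : ℝ), f y ^ 2 ∂σ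

/-- The dual two-weight norm inequality with constant `N`, for nonnegative
`g ∈ L²(ℝ²₊₊; μ)`. -/
def DualNormIneq (lam : ℝ) (σ : Measure ℝ) (μ : Measure (ℝ × ℝ)) (N : ℝ≥0∞) : Prop :=
  ∀ g : ℝ × ℝ → ℝ≥0∞, Measurable g →
    (∫⁻ p in Set.Ioi (0 : ℝ) ×ˢ Set.Ioi (0 : ℝ), g p ^ 2 ∂μ) < ∞ →
    (∫⁻ y in Set.Ioi (0 : ℝ), Padj lam μ g y ^ 2 ∂σ)
      ≤ N ^ 2 * ∫⁻ p in Set.Ioi (0 : ℝ) ×ˢ Set.Ioi (0 : ℝ), g p ^ 2 ∂μ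

/-- The forward testing condition with constant `F`:
`∫_{3Î} (P_σ 1_I)² dμ ≤ F² σ(I)` for every bounded interval `I ⊂ ℝ₊`. -/
def FwdTesting (lam : ℝ) (σ : Measure ℝ) (μ : Measure (ℝ × ℝ)) (F : ℝ≥0∞) : Prop :=
  ∀ a b : ℝ, 0 ≤ a → a < b →
    (∫⁻ p in boxI3 a b, Pfwd lam σ ((Set.Ioo a b).indicator 1) p.1 p.2 ^ 2 ∂μ)
      ≤ F ^ 2 * σ (Set.Ioo a b)

/-- The backward testing condition with constant `B`:
`∫_{3I} (P*_μ (t 1_Î))² dσ ≤ B² ∫_Î t² dμ` for every bounded interval `I ⊂ ℝ₊`. -/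
def BwdTesting (lam : ℝ) (σ : Measure ℝ) (μ : Measure (ℝ × ℝ)) (B : ℝ≥0∞) : Prop :=
  ∀ a b : ℝ, 0 ≤ a → a < b →
    (∫⁻ y in tri a b,
        Padj lam μ ((boxI a b).indicator fun p => ENNReal.ofReal p.2) y ^ 2 ∂σ)
      ≤ B ^ 2 * ∫⁻ p in boxI a b, ENNReal.ofReal p.2 ^ 2 ∂μ

/-- Integrability of `sin θ ^ p` on `(0, π)` for `p > -1`. -/
lemma integrableOn_sin_rpow {p : ℝ} (hp : -1 < p) :
    IntegrableOn (fun θ => Real.sin θ ^ p) (Set.Ioo 0 Real.pi) := by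
  have hmeas : AEStronglyMeasurable (fun θ => Real.sin θ ^ p)
      (volume.restrict (Set.Ioo 0 Real.pi)) := by
    apply Measurable.aestronglyMeasurable; measurability
  rcases le_or_gt 0 p with hp0 | hp0
  · have hc : IntegrableOn (fun _ : ℝ => (1:ℝ)) (Set.Ioo 0 Real.pi) :=
      integrableOn_const measure_Ioo_lt_top.ne
    refine hc.mono' hmeas ?_
    filter_upwards [ae_restrict_mem measurableSet_Ioo] with θ hθ
    have h0 : 0 ≤ Real.sin θ := Real.sin_nonneg_of_nonneg_of_le_pi hθ.1.le hθ.2.le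
    rw [Real.norm_eq_abs, abs_of_nonneg (Real.rpow_nonneg h0 p)]
    exact Real.rpow_le_one h0 (Real.sin_le_one θ) hp0
  · have h1 : IntegrableOn (fun x : ℝ => x ^ p) (Set.Ioc 0 (Real.pi/2)) :=
      (intervalIntegral.intervalIntegrable_rpow' hp).1
    have h2' : IntervalIntegrable (fun x : ℝ => (Real.pi - x) ^ p) volume
        (Real.pi - Real.pi/2) (Real.pi - 0) :=
      ((intervalIntegral.intervalIntegrable_rpow' hp
        (a := 0) (b := Real.pi/2)).comp_sub_left Real.pi).symm
    have h2 : IntegrableOn (fun x : ℝ => (Real.pi - x) ^ p) (Set.Ioc (Real.pi/2) Real.pi) := by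
      have hps : Real.pi - Real.pi/2 = Real.pi/2 := by ring
      rw [hps, sub_zero] at h2'
      exact h2'.1
    -- dominating function
    set g : ℝ → ℝ := fun x =>
      (2/Real.pi) ^ p * (if x ≤ Real.pi/2 then x ^ p else (Real.pi - x) ^ p) with hg_def
    have hg : IntegrableOn g (Set.Ioo 0 Real.pi) := by
      have hunion : IntegrableOn g (Set.Ioc 0 (Real.pi/2) ∪ Set.Ioc (Real.pi/2) Real.pi) := by
        apply IntegrableOn.union
        · refine IntegrableOn.congr_fun (h1.const_mul ((2/Real.pi) ^ p)) ?_ measurableSet_Ioc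
          intro x hx
          simp [hg_def, hx.2]
        · refine IntegrableOn.congr_fun (h2.const_mul ((2/Real.pi) ^ p)) ?_ measurableSet_Ioc
          intro x hx
          simp [hg_def, not_le.2 hx.1]
      apply hunion.mono_set
      rw [Set.Ioc_union_Ioc_eq_Ioc (by positivity) (by linarith [Real.pi_pos])]
      exact Set.Ioo_subset_Ioc_self
    refine hg.mono' hmeas ?_
    filter_upwards [ae_restrict_mem measurableSet_Ioo] with θ hθ
    obtain ⟨hθ1, hθ2⟩ := hθ
    have h0 : 0 < Real.sin θ := Real.sin_pos_of_pos_of_lt_pi hθ1 hθ2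
    rw [Real.norm_eq_abs, abs_of_nonneg (Real.rpow_nonneg h0.le p)]
    rcases le_or_gt θ (Real.pi/2) with hhalf | hhalf
    · have hjordan : 2/Real.pi * θ ≤ Real.sin θ := Real.mul_le_sin hθ1.le hhalf
      have hθpos : 0 < 2/Real.pi * θ :=
        mul_pos (div_pos two_pos Real.pi_pos) hθ1
      calc Real.sin θ ^ p ≤ (2/Real.pi * θ) ^ p :=
            Real.rpow_le_rpow_of_nonpos hθpos hjordan hp0.le
        _ = g θ := by
            rw [Real.mul_rpow (by positivity) hθ1.le, hg_def]
            simp [hhalf]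
    · have h1' : Real.pi - θ ≤ Real.pi/2 := by linarith
      have h2' : 0 ≤ Real.pi - θ := by linarith [hθ2]
      have hjordan : 2/Real.pi * (Real.pi - θ) ≤ Real.sin θ := by
        have := Real.mul_le_sin h2' h1'
        rwa [Real.sin_pi_sub] at this
      have hθpos : 0 < 2/Real.pi * (Real.pi - θ) :=
        mul_pos (div_pos two_pos Real.pi_pos) (by linarith [hθ2])
      calc Real.sin θ ^ p ≤ (2/Real.pi * (Real.pi - θ)) ^ p :=
            Real.rpow_le_rpow_of_nonpos hθpos hjordan hp0.le
        _ = g θ := by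
            rw [Real.mul_rpow (by positivity) h2', hg_def]
            simp [not_le.2 hhalf]

/-- Auxiliary rpow comparison. -/
lemma aux_rpow {A B q : ℝ} (hA : 0 < A) (hB : 0 < B) (h : B ≤ 16 * A) (hq : 0 ≤ q) :
    A ^ (-q) ≤ (16:ℝ) ^ q * B ^ (-q) := by
  have hdiv : B / 16 ≤ A := by linarith
  have hdivpos : 0 < B / 16 := by linarith
  have h16 : (B / 16) ^ (-q) = (16:ℝ) ^ q * B ^ (-q) := by
    rw [Real.div_rpow hB.le (by norm_num), div_eq_mul_inv,
      ← Real.rpow_neg (by norm_num : (0:ℝ) ≤ 16), neg_neg, mul_comm]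
  rw [← h16]
  exact Real.rpow_le_rpow_of_nonpos hdivpos hdiv (by linarith)

/-- Key algebraic comparison of the denominators. -/
lemma denom_comparison {x y z r c : ℝ} (hx : 0 < x) (hy : 0 < y) (hz : 0 < z)
    (hr : 0 < r) (hxy : r ≤ |x - y|) (hzx : |z - x| ≤ 3 * r)
    (hc1 : -1 ≤ c) (hc2 : c ≤ 1) :
    z ^ 2 + y ^ 2 - 2 * z * y * c ≤ 16 * (x ^ 2 + y ^ 2 - 2 * x * y * c) := by
  have e1 : r ^ 2 ≤ (x - y) ^ 2 := by
    have := sq_abs (x - y)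
    nlinarith [abs_nonneg (x - y)]
  have e2 : (z - x) ^ 2 ≤ 9 * r ^ 2 := by
    have := sq_abs (z - x)
    nlinarith [abs_nonneg (z - x)]
  have h1 : 0 ≤ 2 * x * y * (1 - c) := by
    have : 0 ≤ 1 - c := by linarith
    positivity
  have h2 : 0 ≤ y ^ 2 * (1 - c) * (1 + c) := by
    have hc3 : 0 ≤ 1 - c := by linarith
    have hc4 : 0 ≤ 1 + c := by linarith
    positivity
  nlinarith [sq_nonneg ((z - x) - 3 * (x - y * c)), sq_nonneg (z - x), sq_nonneg (x - y * c)]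

/-- Kernel comparison: if `|x − y| ≥ r` and `|z − x| ≤ 3r`, then
`P_t(x, y) ≤ 16^{λ+1} P_t(z, y)`. -/
theorem bessel_poisson_kernel_comparison_far (lam : ℝ) (hlam : 0 < lam)
    (r x y z t : ℝ) (hr : 0 < r) (hx : 0 < x) (hy : 0 < y) (hz : 0 < z) (ht : 0 < t)
    (hxy : r ≤ |x - y|) (hzx : |z - x| ≤ 3 * r) :
    PK lam t x y ≤ (16 : ℝ) ^ (lam + 1) * PK lam t z y := by
  have hpi := Real.pi_pos
  set fx : ℝ → ℝ := fun θ => Real.sin θ ^ (2 * lam - 1) *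
      (x ^ 2 + y ^ 2 + t ^ 2 - 2 * x * y * Real.cos θ) ^ (-(lam + 1)) with hfx_def
  set fz : ℝ → ℝ := fun θ => Real.sin θ ^ (2 * lam - 1) *
      (z ^ 2 + y ^ 2 + t ^ 2 - 2 * z * y * Real.cos θ) ^ (-(lam + 1)) with hfz_def
  -- positivity of denominators for all θ
  have hDz_pos : ∀ θ : ℝ, 0 < z ^ 2 + y ^ 2 + t ^ 2 - 2 * z * y * Real.cos θ := by
    intro θ
    nlinarith [sq_nonneg (z - y), mul_pos ht ht,
      mul_nonneg (mul_nonneg hz.le hy.le) (sub_nonneg.2 (Real.cos_le_one θ))]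
  have hDx_pos : ∀ θ : ℝ, 0 < x ^ 2 + y ^ 2 + t ^ 2 - 2 * x * y * Real.cos θ := by
    intro θ
    nlinarith [sq_nonneg (x - y), mul_pos ht ht,
      mul_nonneg (mul_nonneg hx.le hy.le) (sub_nonneg.2 (Real.cos_le_one θ))]
  -- integrability of fz
  have hfz_int : IntegrableOn fz (Set.Ioo 0 Real.pi) := by
    have hmeas : AEStronglyMeasurable fz (volume.restrict (Set.Ioo 0 Real.pi)) := by
      apply Measurable.aestronglyMeasurable
      apply Measurable.mul
      · measurability
      · measurability
    have hsin := integrableOn_sin_rpow (p := 2 * lam - 1) (by linarith)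
    refine ((hsin.const_mul ((t ^ 2) ^ (-(lam + 1)))).mono' hmeas ?_)
    filter_upwards [ae_restrict_mem measurableSet_Ioo] with θ hθ
    have hs : 0 < Real.sin θ := Real.sin_pos_of_pos_of_lt_pi hθ.1 hθ.2
    have ht2 : (0:ℝ) < t ^ 2 := by positivity
    have hle : t ^ 2 ≤ z ^ 2 + y ^ 2 + t ^ 2 - 2 * z * y * Real.cos θ := by
      nlinarith [sq_nonneg (z - y),
        mul_nonneg (mul_nonneg hz.le hy.le) (sub_nonneg.2 (Real.cos_le_one θ))]
    have hb : (z ^ 2 + y ^ 2 + t ^ 2 - 2 * z * y * Real.cos θ) ^ (-(lam + 1))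
        ≤ (t ^ 2) ^ (-(lam + 1)) :=
      Real.rpow_le_rpow_of_nonpos ht2 hle (by linarith)
    rw [Real.norm_eq_abs, hfz_def]
    have h1 : 0 ≤ Real.sin θ ^ (2 * lam - 1) := Real.rpow_nonneg hs.le _
    have h2 : 0 ≤ (z ^ 2 + y ^ 2 + t ^ 2 - 2 * z * y * Real.cos θ) ^ (-(lam + 1)) :=
      Real.rpow_nonneg (hDz_pos θ).le _
    rw [abs_of_nonneg (by positivity)]
    calc Real.sin θ ^ (2 * lam - 1) *
          (z ^ 2 + y ^ 2 + t ^ 2 - 2 * z * y * Real.cos θ) ^ (-(lam + 1))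
        ≤ Real.sin θ ^ (2 * lam - 1) * (t ^ 2) ^ (-(lam + 1)) := by
          exact mul_le_mul_of_nonneg_left hb h1
      _ = (t ^ 2) ^ (-(lam + 1)) * Real.sin θ ^ (2 * lam - 1) := by ring
  -- pointwise comparison
  have hpt : ∀ θ ∈ Set.Ioo (0:ℝ) Real.pi, fx θ ≤ (16:ℝ) ^ (lam + 1) * fz θ := by
    intro θ hθ
    have hs : 0 < Real.sin θ := Real.sin_pos_of_pos_of_lt_pi hθ.1 hθ.2
    have hDz := hDz_pos θ
    have hDx := hDx_pos θ
    have hcomp : z ^ 2 + y ^ 2 + t ^ 2 - 2 * z * y * Real.cos θ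
        ≤ 16 * (x ^ 2 + y ^ 2 + t ^ 2 - 2 * x * y * Real.cos θ) := by
      have := denom_comparison hx hy hz hr hxy hzx (Real.neg_one_le_cos θ) (Real.cos_le_one θ)
      nlinarith [sq_nonneg t, this]
    have key : (x ^ 2 + y ^ 2 + t ^ 2 - 2 * x * y * Real.cos θ) ^ (-(lam + 1))
        ≤ (16:ℝ) ^ (lam + 1) *
          (z ^ 2 + y ^ 2 + t ^ 2 - 2 * z * y * Real.cos θ) ^ (-(lam + 1)) :=
      aux_rpow hDx hDz hcomp (by linarith)
    calc fx θ = Real.sin θ ^ (2 * lam - 1) *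
          (x ^ 2 + y ^ 2 + t ^ 2 - 2 * x * y * Real.cos θ) ^ (-(lam + 1)) := rfl
      _ ≤ Real.sin θ ^ (2 * lam - 1) * ((16:ℝ) ^ (lam + 1) *
          (z ^ 2 + y ^ 2 + t ^ 2 - 2 * z * y * Real.cos θ) ^ (-(lam + 1))) :=
          mul_le_mul_of_nonneg_left key (Real.rpow_nonneg hs.le _)
      _ = (16:ℝ) ^ (lam + 1) * fz θ := by rw [hfz_def]; ring
  -- integral comparison
  have hint : (∫ θ in Set.Ioo (0:ℝ) Real.pi, fx θ)
      ≤ ∫ θ in Set.Ioo (0:ℝ) Real.pi, (16:ℝ) ^ (lam + 1) * fz θ := by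
    apply integral_mono_of_nonneg
    · filter_upwards [ae_restrict_mem measurableSet_Ioo] with θ hθ
      have hs : 0 < Real.sin θ := Real.sin_pos_of_pos_of_lt_pi hθ.1 hθ.2
      have := hDx_pos θ
      exact mul_nonneg (Real.rpow_nonneg hs.le _) (Real.rpow_nonneg this.le _)
    · exact hfz_int.const_mul _
    · filter_upwards [ae_restrict_mem measurableSet_Ioo] with θ hθ
      exact hpt θ hθ
  have hC : 0 ≤ 2 * lam * t / Real.pi := by positivity
  calc PK lam t x y = (2 * lam * t / Real.pi) * ∫ θ in Set.Ioo (0:ℝ) Real.pi, fx θ := rfl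
    _ ≤ (2 * lam * t / Real.pi) * ∫ θ in Set.Ioo (0:ℝ) Real.pi, (16:ℝ) ^ (lam + 1) * fz θ :=
        mul_le_mul_of_nonneg_left hint hC
    _ = (16:ℝ) ^ (lam + 1) *
          ((2 * lam * t / Real.pi) * ∫ θ in Set.Ioo (0:ℝ) Real.pi, fz θ) := by
        rw [integral_const_mul]; ring
    _ = (16:ℝ) ^ (lam + 1) * PK lam t z y := rfl
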